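/- (Wakamatsu's Lemma for triangulated categories; this is the case n = 1 of the paper's (n+2)-angulated Wakamatsu Lemma.) Let C be a pretriangulated category and let X be a class of objects of C, closed under isomorphisms, which is left closed under extensions. If ξ : x → c is an X-cover of an object c, then in every distinguished triangle x →ξ c → y → Σx completing ξ, one has Hom_C(x̃, y) = 0 for every object x̃ ∈ X. -/

import Mathlib

open CategoryTheory Limits Pretriangulated

/-- **Wakamatsu's Lemma for triangulated categories** (case `n = 1` of the
`(n+2)`-angulated Wakamatsu Lemma): if `X` is a class of objects closed under
isomorphisms and left closed under extensions, and `ξ : x ⟶ c` is an `X`-cover,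
then in any distinguished triangle `x ⟶ c ⟶ y ⟶ Σ x` completing `ξ` we have
`Hom(x̃, y) = 0` for all `x̃ ∈ X`. -/
theorem wakamatsu_triangulated
    {C : Type*} [Category C] [HasZeroObject C] [Preadditive C] [HasShift C ℤ]
    [∀ n : ℤ, (shiftFunctor C n).Additive] [Pretriangulated C]
    (X : Set C)
    -- `X` is closed under isomorphisms
    (hIso : ∀ ⦃a b : C⦄, (a ≅ b) → a ∈ X → b ∈ X)
    -- `X` is left closed under extensions
    (hExt : ∀ (x' x'' : C), x' ∈ X → x'' ∈ X → ∀ (δ : x'' ⟶ x'⟦(1 : ℤ)⟧),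
      ∃ (e : C) (f : x' ⟶ e) (g : e ⟶ x''),
        e ∈ X ∧ Triangle.mk f g δ ∈ distTriang C)
    (x c : C) (ξ : x ⟶ c) (hx : x ∈ X)
    -- `ξ` is an `X`-precover of `c`
    (hPrecover : ∀ (x' : C), x' ∈ X → ∀ f : x' ⟶ c, ∃ g : x' ⟶ x, g ≫ ξ = f)
    -- minimality: `ξ` is an `X`-cover
    (hCover : ∀ g : x ⟶ x, g ≫ ξ = ξ → IsIso g)
    -- a distinguished triangle completing `ξ`
    (y : C) (γ : c ⟶ y) (φ : y ⟶ x⟦(1 : ℤ)⟧)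
    (hT : Triangle.mk ξ γ φ ∈ distTriang C) :
    ∀ (x' : C), x' ∈ X → ∀ f : x' ⟶ y, f = 0 := by
  intro x' hx' f
  -- build an extension of x' by x along δ := f ≫ φ
  obtain ⟨e, g₁, g₂, he, hTe⟩ := hExt x x' hx hx' (f ≫ φ)
  -- complete to a morphism of triangles with identity on x and f on the third object
  obtain ⟨h, hh₁, hh₂⟩ : ∃ h : e ⟶ c, g₁ ≫ h = 𝟙 x ≫ ξ ∧ g₂ ≫ f = h ≫ γ :=
    complete_distinguished_triangle_morphism₂
    (Triangle.mk g₁ g₂ (f ≫ φ)) (Triangle.mk ξ γ φ) hTe hT (𝟙 x) f (by exact (by simp : (f ≫ φ) ≫ (𝟙 x)⟦(1 : ℤ)⟧' = f ≫ φ))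
  rw [Category.id_comp] at hh₁
  -- h factors through ξ since e ∈ X
  obtain ⟨k, hk⟩ := hPrecover e he h
  -- g₁ ≫ k is an automorphism of x, so g₁ is a split mono
  have : IsIso (g₁ ≫ k) := hCover _ (by rw [Category.assoc, hk, hh₁])
  -- hence δ = f ≫ φ is zero
  have hδ : f ≫ φ = 0 := by
    have hz := comp_distTriang_mor_zero₃₁ _ hTe
    change (f ≫ φ) ≫ g₁⟦(1 : ℤ)⟧' = 0 at hz
    have : f ≫ φ ≫ (g₁ ≫ k)⟦(1 : ℤ)⟧' = 0 := by
      rw [Functor.map_comp, ← Category.assoc, ← Category.assoc, Category.assoc f φ,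
        ← Category.assoc f, hz, zero_comp]
    calc f ≫ φ = (f ≫ φ ≫ (g₁ ≫ k)⟦(1 : ℤ)⟧') ≫ inv ((g₁ ≫ k)⟦(1 : ℤ)⟧') := by
          simp
      _ = 0 := by rw [this, zero_comp]
  -- so f factors through γ
  obtain ⟨u, hu⟩ : ∃ u : x' ⟶ c, f = u ≫ γ := Triangle.coyoneda_exact₃ _ hT f hδ
  change f = u ≫ γ at hu
  -- u factors through ξ, and ξ ≫ γ = 0
  obtain ⟨v, hv⟩ := hPrecover x' hx' u
  have : ξ ≫ γ = 0 := comp_distTriang_mor_zero₁₂ _ hT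
  rw [hu, ← hv, Category.assoc, this, comp_zero]
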